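/- Let A be a real m×n matrix with columns F₁,…,Fₙ, let A⁺ be a Moore–Penrose pseudoinverse of A, and set S = Iₙ − A⁺·A. Let τ be a subset of column indices with |τ| ≥ 2 that is span-separated (span{F_j : j ∈ τ} ∩ span{F_i : i ∉ τ} = {0}) and indecomposable (τ admits no partition into two nonempty subsets Y₁, Y₂ with span{F_j : j ∈ Y₁} ∩ span{F_j : j ∈ Y₂} = {0}). Then for every i ∈ τ there exists j ∈ τ with j ≠ i and S_{i,j} ≠ 0. -/

import Mathlib

open Matrix

/-- If `τ` (with at least two elements) is a span-separated and indecomposable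
subset of column indices of `A`, then every `i ∈ τ` has some `j ∈ τ`, `j ≠ i`,
with `S i j ≠ 0`. -/
theorem signature_row_has_offdiag_nonzero_in_cluster
    {m n : ℕ} (A : Matrix (Fin m) (Fin n) ℝ) (Ap : Matrix (Fin n) (Fin m) ℝ)
    (h1 : A * Ap * A = A) (h2 : Ap * A * Ap = Ap)
    (h3 : (A * Ap)ᵀ = A * Ap) (h4 : (Ap * A)ᵀ = Ap * A)
    (S : Matrix (Fin n) (Fin n) ℝ) (hS : S = 1 - Ap * A)
    (τ : Set (Fin n)) (hcard : 2 ≤ τ.ncard)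
    (hsep : Submodule.span ℝ (Aᵀ '' τ) ⊓ Submodule.span ℝ (Aᵀ '' τᶜ) = ⊥)
    (hind : ¬ ∃ Y₁ Y₂ : Set (Fin n), Y₁.Nonempty ∧ Y₂.Nonempty ∧ Disjoint Y₁ Y₂ ∧
      Y₁ ∪ Y₂ = τ ∧
      Submodule.span ℝ (Aᵀ '' Y₁) ⊓ Submodule.span ℝ (Aᵀ '' Y₂) = ⊥) :
    ∀ i ∈ τ, ∃ j ∈ τ, j ≠ i ∧ S i j ≠ 0 := by
  intro i hi
  by_contra hcon
  push_neg at hcon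
  -- hcon : ∀ j ∈ τ, j ≠ i → S i j = 0
  have hT : Sᵀ = S := by rw [hS, transpose_sub, transpose_one, h4]
  have hSsymm : ∀ j k, S j k = S k j := by
    intro j k
    simpa [Matrix.transpose_apply] using congrFun (congrFun hT k) j
  have hB : Ap * A * (Ap * A) = Ap * A := by
    rw [← Matrix.mul_assoc, h2]
  have hSsq : S * S = S := by
    rw [hS, sub_mul, one_mul, mul_sub, mul_one, hB]
    abel
  -- main claim: span of column i meets span of columns τ \ {i} trivially
  have hmain : Submodule.span ℝ (Aᵀ '' {i}) ⊓ Submodule.span ℝ (Aᵀ '' (τ \ {i})) = ⊥ := by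
    by_contra hne
    obtain ⟨v, hv, hv0⟩ := Submodule.ne_bot_iff _ |>.mp hne
    obtain ⟨hv1, hv2⟩ := Submodule.mem_inf.mp hv
    rw [show Aᵀ '' {i} = {Aᵀ i} from Set.image_singleton, Submodule.mem_span_singleton] at hv1
    obtain ⟨a, ha⟩ := hv1
    have haz : a ≠ 0 := by
      rintro rfl
      exact hv0 (by simpa using ha.symm)
    obtain ⟨l, hlsupp, hlv⟩ := (Finsupp.mem_span_image_iff_linearCombination ℝ).mp hv2
    have hlsupp' : ∀ k, k ∉ τ \ {i} → l k = 0 := by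
      intro k hk
      by_contra h0
      exact hk (hlsupp (Finsupp.mem_support_iff.mpr h0))
    have hli : l i = 0 := hlsupp' i (by simp)
    set x : Fin n → ℝ := fun j => (if j = i then a else 0) - l j with hx
    have hvk : ∀ k, v k = ∑ j, l j * A k j := by
      intro k
      rw [← hlv, Finsupp.linearCombination_apply (R := ℝ) (v := (Aᵀ : Fin n → Fin m → ℝ))]
      rw [Finsupp.sum_fintype _ _ (by intro j; simp)]
      simp [Matrix.transpose_apply, Finset.sum_apply, mul_comm]
    have hAx : A *ᵥ x = 0 := by
      funext k
      have hv1k : v k = a * A k i := by rw [← ha]; simp [Matrix.transpose_apply, mul_comm]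
      simp only [Matrix.mulVec, dotProduct, hx, mul_sub, Finset.sum_sub_distrib,
        Pi.zero_apply]
      have e1 : (∑ j, A k j * if j = i then a else 0) = a * A k i := by
        simp [mul_comm]
      have e2 : (∑ j, A k j * l j) = v k := by
        rw [hvk k]; exact Finset.sum_congr rfl (by intros; ring)
      rw [e1, e2, hv1k, sub_self]
    have hSx : S *ᵥ x = x := by
      rw [hS, Matrix.sub_mulVec, Matrix.one_mulVec, ← Matrix.mulVec_mulVec, hAx,
        Matrix.mulVec_zero, sub_zero]
    have hxi : x i = a := by simp [hx, hli]
    have hrow : ∑ k, S i k * x k = x i := congrFun hSx i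
    have hsingle : ∑ k, S i k * x k = S i i * x i := by
      apply Finset.sum_eq_single
      · intro k _ hk
        by_cases hkτ : k ∈ τ
        · rw [hcon k hkτ hk, zero_mul]
        · have : x k = 0 := by
            have hlk : l k = 0 := hlsupp' k (fun h => hkτ h.1)
            simp [hx, hk, hlk]
          rw [this, mul_zero]
      · intro h; exact absurd (Finset.mem_univ i) h
    have hSii : S i i = 1 := by
      have h0 : a = S i i * a := by
        have := hrow.symm.trans hsingle
        rw [hxi] at this
        exact this
      have h' : (S i i - 1) * a = 0 := by rw [sub_mul, one_mul]; linarith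
      rcases mul_eq_zero.mp h' with h | h
      · linarith [sub_eq_zero.mp h]
      · exact absurd h haz
    -- from S*S = S and symmetry: the whole row i of S vanishes off the diagonal
    have hrowzero : ∀ k, k ≠ i → S i k = 0 := by
      have hdiag : ∑ k, S i k * S i k = 1 := by
        have := congrFun (congrFun hSsq i) i
        rw [Matrix.mul_apply] at this
        rw [← hSii]
        rw [← this]
        exact Finset.sum_congr rfl (fun k _ => by rw [hSsymm k i])
      have hsplit : ∑ k ∈ Finset.univ.erase i, S i k * S i k = 0 := by
        have h1' : ∑ k ∈ Finset.univ.erase i, S i k * S i k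
            = (∑ k, S i k * S i k) - S i i * S i i := by
          rw [Finset.sum_erase_eq_sub (Finset.mem_univ i)]
        rw [h1', hdiag, hSii]; ring
      intro k hk
      have := (Finset.sum_eq_zero_iff_of_nonneg (fun k _ => mul_self_nonneg (S i k))).mp
        hsplit k (Finset.mem_erase.mpr ⟨hk, Finset.mem_univ k⟩)
      exact mul_self_eq_zero.mp this
    -- hence column i of Ap * A vanishes, so column i of A vanishes
    have hcol : ∀ j, (Ap * A) j i = 0 := by
      intro j
      have hSji : (Ap * A) j i = (1 : Matrix (Fin n) (Fin n) ℝ) j i - S j i := by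
        rw [hS]; simp
      rcases eq_or_ne j i with rfl | hj
      · rw [hSji, hSii]; simp
      · rw [hSji, hSsymm j i, hrowzero j hj]
        simp [Matrix.one_apply_ne hj]
    have hAcol : ∀ k, A k i = 0 := by
      intro k
      have : A k i = (A * (Ap * A)) k i := by rw [← Matrix.mul_assoc, h1]
      rw [this, Matrix.mul_apply]
      exact Finset.sum_eq_zero (fun j _ => by rw [hcol j, mul_zero])
    have hvz : v = 0 := by
      rw [← ha]
      funext k
      simp [Matrix.transpose_apply, hAcol k]
    exact hv0 hvz
  -- contradict indecomposability with Y₁ = {i}, Y₂ = τ \ {i}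
  have h1c : 1 < τ.ncard := by omega
  obtain ⟨j, hjτ, hji⟩ := Set.exists_ne_of_one_lt_ncard h1c i
  exact hind ⟨{i}, τ \ {i}, Set.singleton_nonempty i, ⟨j, hjτ, hji⟩,
    Set.disjoint_singleton_left.mpr (by simp),
    by rw [Set.singleton_union, Set.insert_diff_singleton, Set.insert_eq_self.mpr hi],
    hmain⟩
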